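/- Let T be an atemporal DL-Lite TBox consisting only of disjointness axioms A ⊓ B ⊑ ⊥ between distinct concept names and functionality assertions funct(R) on role names, and let A be a finite ABox of positive atomic assertions. Define the conflict graph CG(T,A): its vertices are the assertions of A, with an edge between two distinct assertions α, β iff {α,β} is a conflicting pair (α = A(a) and β = B(a) with A ⊓ B ⊑ ⊥ ∈ T, or α = R(a,b) and β = R(a,b') with b ≠ b' and funct(R) ∈ T). Then: (i) for every vertex cover S of CG(T,A) (a set of assertions meeting every edge), the ABox A ∖ S is T-consistent; and (ii) A ∖ S is a maximal T-consistent subset of A (a repair) if and only if S is a minimal vertex cover of CG(T,A). -/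

import Mathlib

/-- Positive atomic ABox assertions: `A(a)` for a concept name `A` or `R(a,b)` for a
role name `R` (names coded by natural numbers). -/
inductive Assertion : Type
  | conc (A a : ℕ)
  | role (R a b : ℕ)
deriving DecidableEq

/-- A DL-Lite TBox consisting only of disjointness axioms `A ⊓ B ⊑ ⊥` between concept
names (recorded as pairs `(A, B)`) and functionality assertions `funct(R)` on role
names. -/
structure DTBox : Type where
  disj  : Finset (ℕ × ℕ)
  funct : Finset ℕ

/-- An atemporal DL interpretation: a nonempty domain, a rigid element for each
individual name with distinct names denoting distinct elements (unique name assumption),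
a subset for each concept name, and a binary relation for each role name. -/
structure Interp (Δ : Type) : Type where
  nonempty : Nonempty Δ
  ind  : ℕ → Δ
  ind_inj : Function.Injective ind
  conc : ℕ → Set Δ
  role : ℕ → Set (Δ × Δ)

variable {Δ : Type}

/-- A binary relation is a partial function. -/
def Functional (r : Set (Δ × Δ)) : Prop :=
  ∀ d e e', (d, e) ∈ r → (d, e') ∈ r → e = e'

/-- Satisfaction of an assertion. -/
def Interp.satA (J : Interp Δ) : Assertion → Prop
  | .conc A a => J.ind a ∈ J.conc A
  | .role R a b => (J.ind a, J.ind b) ∈ J.role R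

/-- `J` satisfies the knowledge base `(T, Ab)`. -/
def Interp.satKB (J : Interp Δ) (T : DTBox) (Ab : Finset Assertion) : Prop :=
  (∀ p ∈ T.disj, J.conc p.1 ∩ J.conc p.2 = ∅) ∧
  (∀ R ∈ T.funct, Functional (J.role R)) ∧
  (∀ α ∈ Ab, J.satA α)

/-- Consistency of a knowledge base `(T, Ab)`. -/
def Consistent (T : DTBox) (Ab : Finset Assertion) : Prop :=
  ∃ (Δ : Type) (J : Interp Δ), J.satKB T Ab

/-- `α` and `β` form a conflicting pair w.r.t. `T` (in this order): either `α = A(a)` and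
`β = B(a)` with `A ⊓ B ⊑ ⊥ ∈ T`, or `α = R(a,b)` and `β = R(a,b')` with `b ≠ b'` and
`funct(R) ∈ T`. -/
def Conflict (T : DTBox) (α β : Assertion) : Prop :=
  (∃ A B a : ℕ, α = Assertion.conc A a ∧ β = Assertion.conc B a ∧ (A, B) ∈ T.disj) ∨
  (∃ R a b b' : ℕ, α = Assertion.role R a b ∧ β = Assertion.role R a b' ∧
    b ≠ b' ∧ R ∈ T.funct)

/-- The conflict graph `CG(T, Ab)`: vertices are assertions, with an edge between two
distinct assertions of `Ab` iff they form a conflicting pair. -/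
def conflictGraph (T : DTBox) (Ab : Finset Assertion) : SimpleGraph Assertion where
  Adj α β := α ≠ β ∧ α ∈ Ab ∧ β ∈ Ab ∧ (Conflict T α β ∨ Conflict T β α)
  symm := by
    constructor
    intro α β h
    exact ⟨h.1.symm, h.2.2.1, h.2.1, h.2.2.2.symm⟩
  loopless := by
    constructor
    intro α h
    exact h.1 rfl

/-- A vertex cover of a graph: a set of vertices meeting every edge. -/
def IsVertexCover (G : SimpleGraph Assertion) (S : Finset Assertion) : Prop :=
  ∀ α β : Assertion, G.Adj α β → α ∈ S ∨ β ∈ S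

/-- A minimal vertex cover: a vertex cover no proper subset of which is a vertex cover. -/
def IsMinimalVertexCover (G : SimpleGraph Assertion) (S : Finset Assertion) : Prop :=
  IsVertexCover G S ∧ ∀ S' : Finset Assertion, S' ⊂ S → ¬ IsVertexCover G S'

/-- `B` is a maximal `T`-consistent subset (a repair) of `Ab`. -/
def IsRepair (T : DTBox) (Ab B : Finset Assertion) : Prop :=
  B ⊆ Ab ∧ Consistent T B ∧
    ∀ B' : Finset Assertion, B ⊂ B' → B' ⊆ Ab → ¬ Consistent T B'

lemma canon_consistent (T : DTBox) (B : Finset Assertion)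
    (h : ∀ α ∈ B, ∀ β ∈ B, ¬ Conflict T α β) : Consistent T B := by
  refine ⟨ℕ, ⟨⟨0⟩, id, fun a b hab => hab,
    fun A => {a | Assertion.conc A a ∈ B},
    fun R => {p | Assertion.role R p.1 p.2 ∈ B}⟩, ?_, ?_, ?_⟩
  · intro p hp
    ext a
    simp only [Set.mem_inter_iff, Set.mem_setOf_eq, Set.mem_empty_iff_false, iff_false, not_and]
    intro h1 h2
    exact h _ h1 _ h2 (Or.inl ⟨p.1, p.2, a, rfl, rfl, by simpa using hp⟩)
  · intro R hR d e e' h1 h2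
    by_contra hne
    exact h _ h1 _ h2 (Or.inr ⟨R, d, e, e', rfl, rfl, hne, hR⟩)
  · intro α hα
    cases α with
    | conc A a => exact hα
    | role R a b => exact hα

lemma cf_of_consistent (T : DTBox) (B : Finset Assertion)
    (h : Consistent T B) : ∀ α ∈ B, ∀ β ∈ B, ¬ Conflict T α β := by
  obtain ⟨Δ, J, hd, hf, hs⟩ := h
  rintro α hα β hβ (⟨A, A', a, rfl, rfl, hdisj⟩ | ⟨R, a, b, b', rfl, rfl, hne, hfun⟩)
  · have h1 : J.ind a ∈ J.conc A := hs _ hα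
    have h2 : J.ind a ∈ J.conc A' := hs _ hβ
    have hmem : J.ind a ∈ (J.conc A ∩ J.conc A') := ⟨h1, h2⟩
    rw [hd (A, A') hdisj] at hmem
    exact hmem
  · have h1 : (J.ind a, J.ind b) ∈ J.role R := hs _ hα
    have h2 : (J.ind a, J.ind b') ∈ J.role R := hs _ hβ
    exact hne (J.ind_inj (hf R hfun _ _ _ h1 h2))

lemma cf_of_cover (T : DTBox) (hT : ∀ p ∈ T.disj, p.1 ≠ p.2)
    (Ab S : Finset Assertion)
    (hcov : IsVertexCover (conflictGraph T Ab) S) :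
    ∀ α ∈ Ab \ S, ∀ β ∈ Ab \ S, ¬ Conflict T α β := by
  intro α hα β hβ hc
  simp only [Finset.mem_sdiff] at hα hβ
  by_cases hab : α = β
  · subst hab
    rcases hc with ⟨A, B, a, h1, h2, hd⟩ | ⟨R, a, b, b', h1, h2, hne, _⟩
    · rw [h1] at h2
      injection h2 with hAB _
      exact hT _ hd hAB
    · rw [h1] at h2
      injection h2 with _ _ h2''
      exact hne h2''
  · rcases hcov α β ⟨hab, hα.1, hβ.1, Or.inl hc⟩ with h | h
    · exact hα.2 h
    · exact hβ.2 h

/-- For a TBox of disjointness axioms between *distinct* concept names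
and functionality assertions, and any vertex cover `S` of the conflict graph `CG(T, Ab)`:
(i) `Ab ∖ S` is `T`-consistent, and (ii) `Ab ∖ S` is a maximal `T`-consistent subset of
`Ab` (a repair) iff `S` is a minimal vertex cover of `CG(T, Ab)`. -/
theorem vertex_cover_removal_repairs (T : DTBox)
    (hT : ∀ p ∈ T.disj, p.1 ≠ p.2)
    (Ab S : Finset Assertion) (hS : S ⊆ Ab)
    (hcov : IsVertexCover (conflictGraph T Ab) S) :
    Consistent T (Ab \ S) ∧
      (IsRepair T Ab (Ab \ S) ↔ IsMinimalVertexCover (conflictGraph T Ab) S) := by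
  have cons : Consistent T (Ab \ S) := canon_consistent T _ (cf_of_cover T hT Ab S hcov)
  refine ⟨cons, ?_, ?_⟩
  · -- repair → minimal vertex cover
    intro hrep
    refine ⟨hcov, ?_⟩
    intro S' hS' hcov'
    obtain ⟨x, hxS, hxS'⟩ := Finset.exists_of_ssubset hS'
    have hsub : Ab \ S ⊂ Ab \ S' := by
      constructor
      · exact Finset.sdiff_subset_sdiff (le_refl _) hS'.1
      · intro hle
        have hx1 : x ∈ Ab \ S' := Finset.mem_sdiff.2 ⟨hS hxS, hxS'⟩
        have hx2 : x ∈ Ab \ S := hle hx1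
        exact (Finset.mem_sdiff.1 hx2).2 hxS
    exact hrep.2.2 (Ab \ S') hsub Finset.sdiff_subset
      (canon_consistent T _ (cf_of_cover T hT Ab S' hcov'))
  · -- minimal vertex cover → repair
    intro hmin
    refine ⟨Finset.sdiff_subset, cons, ?_⟩
    intro B' hBB' hB'Ab hB'cons
    obtain ⟨x, hxB', hxNot⟩ := Finset.exists_of_ssubset hBB'
    have hxS : x ∈ S := by
      by_contra h
      exact hxNot (Finset.mem_sdiff.2 ⟨hB'Ab hxB', h⟩)
    have hcf := cf_of_consistent T B' hB'cons
    apply hmin.2 (S.erase x) (Finset.erase_ssubset hxS)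
    intro α β hadj
    by_contra hno
    push_neg at hno
    obtain ⟨hα, hβ⟩ := hno
    have hmemB' : ∀ γ ∈ Ab, γ ∉ S.erase x → γ ∈ B' := by
      intro γ hγ h2
      by_cases hγS : γ ∈ S
      · have hγx : γ = x := by
          by_contra h3
          exact h2 (Finset.mem_erase.2 ⟨h3, hγS⟩)
        exact hγx ▸ hxB'
      · exact hBB'.1 (Finset.mem_sdiff.2 ⟨hγ, hγS⟩)
    have hαB' := hmemB' α hadj.2.1 hα
    have hβB' := hmemB' β hadj.2.2.1 hβ
    rcases hadj.2.2.2 with hc | hc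
    · exact hcf α hαB' β hβB' hc
    · exact hcf β hβB' α hαB' hc
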